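/- Let p ≡ 1 (mod 4) be a prime and b an integer. Then the set {N_p(a,b) : 1 < a < p, (a/p) = -1} has exactly one element. -/

import Mathlib

open Finset

/-- `N_p(a,b)`: number of `x` with `1 ≤ x ≤ (p-1)/2` and `{x²+b}_p > {a·x²+b}_p`. -/
def Np (p : ℕ) (a b : ℤ) : ℕ :=
  ((Finset.Icc 1 ((p - 1) / 2)).filter
    (fun x : ℕ => ((x : ℤ) ^ 2 + b) % p > (a * (x : ℤ) ^ 2 + b) % p)).card

set_option linter.unusedSectionVars false

namespace NpAux

variable {p : ℕ} [Fact p.Prime]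

/-- normal form of a nonzero residue: representative in `[1,(p-1)/2]` of `±u`. -/
def nm (p : ℕ) [NeZero p] (u : ZMod p) : ℕ := min u.val (p - u.val)

lemma podd (hp4 : p % 4 = 1) : p % 2 = 1 := by omega

lemma pge5 (hp4 : p % 4 = 1) : 5 ≤ p := by
  have := (Fact.out : p.Prime).two_le
  rcases Nat.lt_or_ge p 5 with h | h
  · interval_cases p <;> simp_all
  · exact h

lemma nm_mem (hp : p % 2 = 1) {u : ZMod p} (hu : u ≠ 0) :
    nm p u ∈ Finset.Icc 1 ((p - 1) / 2) := by
  have h1 : u.val < p := ZMod.val_lt u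
  have h2 : u.val ≠ 0 := fun h => hu ((ZMod.val_eq_zero u).mp h)
  simp only [nm, Finset.mem_Icc]
  omega

lemma nm_cast [NeZero p] (u : ZMod p) :
    ((nm p u : ℕ) : ZMod p) = u ∨ ((nm p u : ℕ) : ZMod p) = -u := by
  rcases eq_or_ne u 0 with rfl | hu
  · left; simp [nm]
  · have h1 : u.val < p := ZMod.val_lt u
    rcases min_cases u.val (p - u.val) with ⟨h, _⟩ | ⟨h, _⟩
    · left
      rw [nm, h, ZMod.natCast_val, ZMod.cast_id]
    · right
      rw [nm, h, Nat.cast_sub h1.le, ZMod.natCast_self, ZMod.natCast_val, ZMod.cast_id,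
        zero_sub]

lemma nm_sq [NeZero p] (u : ZMod p) : ((nm p u : ℕ) : ZMod p) ^ 2 = u ^ 2 := by
  rcases nm_cast u with h | h <;> rw [h] <;> ring

lemma nm_neg [NeZero p] (u : ZMod p) : nm p (-u) = nm p u := by
  rcases eq_or_ne u 0 with rfl | hu
  · simp
  · have h1 : u.val < p := ZMod.val_lt u
    have h2 : u.val ≠ 0 := fun h => hu ((ZMod.val_eq_zero u).mp h)
    simp only [nm, ZMod.neg_val, if_neg hu]
    omega

lemma nm_coe (hp : p % 2 = 1) {x : ℕ} (hx : x ∈ Finset.Icc 1 ((p - 1) / 2)) :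
    nm p ((x : ZMod p)) = x := by
  simp only [Finset.mem_Icc] at hx
  have hxp : x < p := by omega
  simp only [nm, ZMod.val_cast_of_lt hxp]
  omega

lemma coe_ne_zero (hp : p % 2 = 1) {x : ℕ} (hx : x ∈ Finset.Icc 1 ((p - 1) / 2)) :
    (x : ZMod p) ≠ 0 := by
  simp only [Finset.mem_Icc] at hx
  rw [Ne, ZMod.natCast_eq_zero_iff]
  intro h
  have := Nat.le_of_dvd (by omega) h
  omega

lemma sum_nm (hp : p % 2 = 1) {r : ZMod p} (hr : r ≠ 0) (f : ℕ → ℤ) :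
    ∑ x ∈ Finset.Icc 1 ((p - 1) / 2), f (nm p (r * x)) =
      ∑ x ∈ Finset.Icc 1 ((p - 1) / 2), f x := by
  refine Finset.sum_nbij' (fun x => nm p (r * x)) (fun y => nm p (r⁻¹ * y)) ?_ ?_ ?_ ?_ ?_
  · intro x hx
    exact nm_mem hp (mul_ne_zero hr (coe_ne_zero hp hx))
  · intro y hy
    exact nm_mem hp (mul_ne_zero (inv_ne_zero hr) (coe_ne_zero hp hy))
  · intro x hx
    show nm p (r⁻¹ * ((nm p (r * (x : ZMod p)) : ℕ) : ZMod p)) = x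
    rcases nm_cast (r * (x : ZMod p)) with h | h
    · rw [h, ← mul_assoc, inv_mul_cancel₀ hr, one_mul, nm_coe hp hx]
    · rw [h, mul_neg, nm_neg, ← mul_assoc, inv_mul_cancel₀ hr, one_mul, nm_coe hp hx]
  · intro y hy
    show nm p (r * ((nm p (r⁻¹ * (y : ZMod p)) : ℕ) : ZMod p)) = y
    rcases nm_cast (r⁻¹ * (y : ZMod p)) with h | h
    · rw [h, ← mul_assoc, mul_inv_cancel₀ hr, one_mul, nm_coe hp hy]
    · rw [h, mul_neg, nm_neg, ← mul_assoc, mul_inv_cancel₀ hr, one_mul, nm_coe hp hy]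
  · intro x hx; rfl

lemma sum_emod_eq (hp : p % 2 = 1) {r : ZMod p} (hr : r ≠ 0) (c₁ c₂ d : ℤ)
    (h : (c₂ : ZMod p) = r ^ 2 * (c₁ : ZMod p)) :
    ∑ x ∈ Finset.Icc 1 ((p - 1) / 2), ((c₁ * (x : ℤ) ^ 2 + d) % p) =
      ∑ x ∈ Finset.Icc 1 ((p - 1) / 2), ((c₂ * (x : ℤ) ^ 2 + d) % p) := by
  have key : ∀ x : ℕ, ((c₁ * ((nm p (r * x) : ℕ) : ℤ) ^ 2 + d) % p)
      = ((c₂ * (x : ℤ) ^ 2 + d) % p) := by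
    intro x
    have : ((c₁ * ((nm p (r * x) : ℕ) : ℤ) ^ 2 + d : ℤ) : ZMod p)
        = ((c₂ * (x : ℤ) ^ 2 + d : ℤ) : ZMod p) := by
      push_cast
      rw [nm_sq, h]
      ring
    exact (ZMod.intCast_eq_intCast_iff _ _ _).mp this
  calc ∑ x ∈ Finset.Icc 1 ((p - 1) / 2), ((c₁ * (x : ℤ) ^ 2 + d) % p)
      = ∑ x ∈ Finset.Icc 1 ((p - 1) / 2), ((c₁ * ((nm p (r * x) : ℕ) : ℤ) ^ 2 + d) % p) :=
        (sum_nm hp hr (fun y => (c₁ * (y : ℤ) ^ 2 + d) % p)).symm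
    _ = _ := by
        exact Finset.sum_congr rfl fun x _ => key x

lemma neg_emod_add {y : ℤ} (hy : ¬ ((p : ℤ)) ∣ y) :
    y % p + (-y) % p = p := by
  have hp0 : (0 : ℤ) < p := by
    exact_mod_cast (Fact.out : p.Prime).pos
  have h1 : 0 ≤ y % p := Int.emod_nonneg y (by positivity)
  have h2 : y % p < p := Int.emod_lt_of_pos y hp0
  have h3 : y % p ≠ 0 := fun h => hy (Int.dvd_of_emod_eq_zero h)
  have h4 : (-y) % (p : ℤ) = (-(y % p)) % p := by
    have := Int.sub_emod 0 y (p : ℤ)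
    simpa using this
  have h5 : (-(y % p)) % p = (-(y % p) + p * 1) % p := (Int.add_mul_emod_self_left _ _ _).symm
  have h6 : (-(y % p) + p * 1) % p = -(y % p) + p * 1 :=
    Int.emod_eq_of_lt (by omega) (by omega)
  omega

/-- Key identity: `p * Np p a b` as a sum of residues. -/
lemma key (hp : p % 2 = 1) (a b : ℤ) (ha : ((a - 1 : ℤ) : ZMod p) ≠ 0) :
    (p : ℤ) * Np p a b =
      (∑ x ∈ Finset.Icc 1 ((p - 1) / 2), (((a - 1) * (x : ℤ) ^ 2) % p))
      + (∑ x ∈ Finset.Icc 1 ((p - 1) / 2), (((x : ℤ) ^ 2 + b) % p))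
      - (∑ x ∈ Finset.Icc 1 ((p - 1) / 2), ((a * (x : ℤ) ^ 2 + b) % p)) := by
  have hp0 : (0 : ℤ) < p := by exact_mod_cast (Fact.out : p.Prime).pos
  have main : ∀ x ∈ Finset.Icc 1 ((p - 1) / 2),
      (if ((x : ℤ) ^ 2 + b) % p > (a * (x : ℤ) ^ 2 + b) % p then (p : ℤ) else 0)
      = ((a - 1) * (x : ℤ) ^ 2) % p + ((x : ℤ) ^ 2 + b) % p - (a * (x : ℤ) ^ 2 + b) % p := by
    intro x hx
    set u : ℤ := (x : ℤ) ^ 2 + b with hu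
    set v : ℤ := a * (x : ℤ) ^ 2 + b with hv
    have hvu : v - u = (a - 1) * (x : ℤ) ^ 2 := by ring
    have hne : u % p ≠ v % p := by
      intro h
      have : ((u : ℤ) : ZMod p) = ((v : ℤ) : ZMod p) :=
        (ZMod.intCast_eq_intCast_iff _ _ _).mpr h
      have hz : ((v - u : ℤ) : ZMod p) = 0 := by
        push_cast at this ⊢
        rw [sub_eq_zero]
        exact this.symm
      rw [hvu] at hz
      push_cast at hz
      rcases mul_eq_zero.mp hz with h1 | h1
      · exact ha (by push_cast; exact h1)
      · exact coe_ne_zero hp hx (sq_eq_zero_iff.mp h1)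
    have hsub : (v - u) % p = (v % p - u % p) % p := Int.sub_emod v u p
    have hA1 : 0 ≤ u % p := Int.emod_nonneg u (by positivity)
    have hA2 : u % p < p := Int.emod_lt_of_pos u hp0
    have hB1 : 0 ≤ v % p := Int.emod_nonneg v (by positivity)
    have hB2 : v % p < p := Int.emod_lt_of_pos v hp0
    rw [← hvu]
    by_cases hgt : u % p > v % p
    · rw [if_pos hgt]
      have h5 : (v % p - u % p) % p = (v % p - u % p + p * 1) % p :=
        (Int.add_mul_emod_self_left _ _ _).symm
      have h6 : (v % p - u % p + p * 1) % p = v % p - u % p + p * 1 :=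
        Int.emod_eq_of_lt (by omega) (by omega)
      omega
    · rw [if_neg hgt]
      have h6 : (v % p - u % p) % p = v % p - u % p :=
        Int.emod_eq_of_lt (by omega) (by omega)
      omega
  have card_eq : (p : ℤ) * Np p a b
      = ∑ x ∈ Finset.Icc 1 ((p - 1) / 2),
          (if ((x : ℤ) ^ 2 + b) % p > (a * (x : ℤ) ^ 2 + b) % p then (p : ℤ) else 0) := by
    rw [Np, Finset.card_filter]
    push_cast
    rw [Finset.mul_sum]
    refine Finset.sum_congr rfl fun x _ => ?_
    split <;> simp
  rw [card_eq, Finset.sum_congr rfl main]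
  rw [Finset.sum_sub_distrib, Finset.sum_add_distrib]

/-- The first sum: for `p ≡ 1 (mod 4)` it equals `p*((p-1)/2)/2` independently of `e`. -/
lemma sumA (hp4 : p % 4 = 1) {e : ℤ} (he : ((e : ℤ) : ZMod p) ≠ 0) :
    2 * ∑ x ∈ Finset.Icc 1 ((p - 1) / 2), ((e * (x : ℤ) ^ 2) % p)
      = (p : ℤ) * ((p - 1) / 2 : ℕ) := by
  have hp : p % 2 = 1 := podd hp4
  obtain ⟨i, hi⟩ := (ZMod.exists_sq_eq_neg_one_iff (p := p)).mpr (by omega)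
  have hi2 : i ^ 2 = -1 := by rw [sq]; exact hi.symm
  have hi0 : i ≠ 0 := by
    intro h
    rw [h, mul_zero] at hi
    simpa using hi
  have hshift := sum_emod_eq hp hi0 e (-e) 0 (by push_cast; rw [hi2]; ring)
  simp only [add_zero] at hshift
  have step : ∀ x ∈ Finset.Icc 1 ((p - 1) / 2),
      ((e * (x : ℤ) ^ 2) % p) + ((-e * (x : ℤ) ^ 2) % p) = (p : ℤ) := by
    intro x hx
    have hnd : ¬ ((p : ℤ)) ∣ e * (x : ℤ) ^ 2 := by
      rw [← ZMod.intCast_zmod_eq_zero_iff_dvd]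
      push_cast
      exact mul_ne_zero he (pow_ne_zero 2 (coe_ne_zero hp hx))
    have := neg_emod_add (p := p) hnd
    rw [neg_mul]
    omega
  calc 2 * ∑ x ∈ Finset.Icc 1 ((p - 1) / 2), ((e * (x : ℤ) ^ 2) % p)
      = (∑ x ∈ Finset.Icc 1 ((p - 1) / 2), ((e * (x : ℤ) ^ 2) % p))
        + ∑ x ∈ Finset.Icc 1 ((p - 1) / 2), ((-e * (x : ℤ) ^ 2) % p) := by
        rw [← hshift]; ring
    _ = ∑ x ∈ Finset.Icc 1 ((p - 1) / 2),
          (((e * (x : ℤ) ^ 2) % p) + ((-e * (x : ℤ) ^ 2) % p)) := by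
        rw [Finset.sum_add_distrib]
    _ = ∑ _x ∈ Finset.Icc 1 ((p - 1) / 2), (p : ℤ) := Finset.sum_congr rfl step
    _ = (p : ℤ) * ((p - 1) / 2 : ℕ) := by
        rw [Finset.sum_const, Nat.card_Icc, Nat.add_sub_cancel, nsmul_eq_mul, mul_comm]

lemma int_ne_zero_of_Ioo {a : ℤ} (ha : a ∈ Finset.Ioo (1 : ℤ) (p : ℤ)) :
    ((a : ℤ) : ZMod p) ≠ 0 := by
  simp only [Finset.mem_Ioo] at ha
  rw [Ne, ZMod.intCast_zmod_eq_zero_iff_dvd]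
  intro h
  have := Int.le_of_dvd (by omega) h
  omega

lemma sub_one_ne_zero_of_Ioo {a : ℤ} (ha : a ∈ Finset.Ioo (1 : ℤ) (p : ℤ)) :
    ((a - 1 : ℤ) : ZMod p) ≠ 0 := by
  simp only [Finset.mem_Ioo] at ha
  rw [Ne, ZMod.intCast_zmod_eq_zero_iff_dvd]
  intro h
  have := Int.le_of_dvd (by omega) h
  omega

/-- Main constancy lemma. -/
lemma Np_const (hp4 : p % 4 = 1) (b : ℤ) {a₁ a₂ : ℤ}
    (h₁ : a₁ ∈ Finset.Ioo (1 : ℤ) (p : ℤ)) (h₂ : a₂ ∈ Finset.Ioo (1 : ℤ) (p : ℤ))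
    (hl₁ : legendreSym p a₁ = -1) (hl₂ : legendreSym p a₂ = -1) :
    Np p a₁ b = Np p a₂ b := by
  have hp : p % 2 = 1 := podd hp4
  have hα₁ : ((a₁ : ℤ) : ZMod p) ≠ 0 := int_ne_zero_of_Ioo h₁
  have hα₂ : ((a₂ : ℤ) : ZMod p) ≠ 0 := int_ne_zero_of_Ioo h₂
  -- a₁ * a₂ is a square
  have hsq : IsSquare (((a₁ * a₂ : ℤ)) : ZMod p) := by
    rw [← legendreSym.eq_one_iff p (by push_cast; exact mul_ne_zero hα₁ hα₂)]
    rw [legendreSym.mul, hl₁, hl₂]; norm_num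
  obtain ⟨s, hs⟩ := hsq
  have hs0 : s ≠ 0 := by
    intro h; rw [h, mul_zero] at hs
    push_cast at hs
    exact mul_ne_zero hα₁ hα₂ hs
  set r : ZMod p := s * ((a₁ : ℤ) : ZMod p)⁻¹ with hr_def
  have hr0 : r ≠ 0 := mul_ne_zero hs0 (inv_ne_zero hα₁)
  have hrel : ((a₂ : ℤ) : ZMod p) = r ^ 2 * ((a₁ : ℤ) : ZMod p) := by
    push_cast at hs
    rw [hr_def]
    field_simp
    linear_combination hs
  -- the three sum comparisons
  have hB := sum_emod_eq hp hr0 a₁ a₂ b hrel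
  have hA₁ := sumA hp4 (e := a₁ - 1) (sub_one_ne_zero_of_Ioo h₁)
  have hA₂ := sumA hp4 (e := a₂ - 1) (sub_one_ne_zero_of_Ioo h₂)
  have hkey₁ := key hp a₁ b (sub_one_ne_zero_of_Ioo h₁)
  have hkey₂ := key hp a₂ b (sub_one_ne_zero_of_Ioo h₂)
  have hpv : (p : ℤ) * Np p a₁ b = (p : ℤ) * Np p a₂ b := by omega
  have hp0 : (p : ℤ) ≠ 0 := by
    have := (Fact.out : p.Prime).pos; positivity
  exact_mod_cast mul_left_cancel₀ hp0 hpv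

end NpAux

theorem stmt_13 (p : ℕ) [Fact p.Prime] (hp4 : p % 4 = 1) (b : ℤ) :
    (((Finset.Ioo (1 : ℤ) (p : ℤ)).filter (fun a => legendreSym p a = -1)).image
      (fun a => Np p a b)).card = 1 := by
  have hp5 := NpAux.pge5 (p := p) hp4
  -- nonemptiness: there exists a nonsquare
  have hchar : ringChar (ZMod p) ≠ 2 := by
    rw [ZMod.ringChar_zmod_n]
    omega
  obtain ⟨c, hc⟩ := FiniteField.exists_nonsquare hchar
  have hc0 : c ≠ 0 := by rintro rfl; exact hc ⟨0, by simp⟩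
  have hc1 : c ≠ 1 := by rintro rfl; exact hc ⟨1, by simp⟩
  have hcv : ((c.val : ℤ) : ZMod p) = c := by
    push_cast
    rw [ZMod.natCast_val, ZMod.cast_id]
  have hvne0 : c.val ≠ 0 := fun h => hc0 ((ZMod.val_eq_zero c).mp h)
  have hvne1 : c.val ≠ 1 := by
    intro h
    apply hc1
    rw [← hcv, h]
    norm_num
  have hvlt : c.val < p := ZMod.val_lt c
  have hmem : (c.val : ℤ) ∈ (Finset.Ioo (1 : ℤ) (p : ℤ)).filter
      (fun a => legendreSym p a = -1) := by
    rw [Finset.mem_filter, Finset.mem_Ioo]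
    refine ⟨⟨by exact_mod_cast (by omega : 1 < c.val), by exact_mod_cast hvlt⟩, ?_⟩
    rw [legendreSym.eq_neg_one_iff, hcv]
    exact hc
  refine le_antisymm ?_ ?_
  · rw [Finset.card_le_one]
    intro y hy z hz
    rw [Finset.mem_image] at hy hz
    obtain ⟨a₁, ha₁, rfl⟩ := hy
    obtain ⟨a₂, ha₂, rfl⟩ := hz
    rw [Finset.mem_filter] at ha₁ ha₂
    exact NpAux.Np_const hp4 b ha₁.1 ha₂.1 ha₁.2 ha₂.2
  · rw [Nat.one_le_iff_ne_zero, ← Nat.pos_iff_ne_zero, Finset.card_pos]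
    exact ⟨Np p (c.val : ℤ) b, Finset.mem_image_of_mem _ hmem⟩
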